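/- arXiv:2301.08644 — 3 statements merged into one kernel-verified Lean document; each statement's English description precedes it below -/
import Mathlib

section
/- Suppose a < 1 - 1/(2(β+1)) (diffusive regime). Then w_n / n^{1 - 2(a(β+1) - β)} converges, as n → ∞, to l(β) = (1/(1 + 2(β - a(β+1)))) · (Γ(a(β+1)+1)/Γ(β+1))^2. -/
open Filter Finset Real MeasureTheory

lemma tendsto_natAdd_div (A B : ℝ) :
    Filter.Tendsto (fun n : ℕ => ((n : ℝ) + A) / ((n : ℝ) + B)) atTop (nhds 1) := by
  have hB : Tendsto (fun n : ℕ => (n : ℝ) + B) atTop atTop :=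
    tendsto_atTop_add_const_right _ B tendsto_natCast_atTop_atTop
  have h0 : Tendsto (fun n : ℕ => ((n : ℝ) + B)⁻¹) atTop (nhds 0) := hB.inv_tendsto_atTop
  have h1 : Tendsto (fun n : ℕ => 1 + (A - B) * ((n : ℝ) + B)⁻¹) atTop
      (nhds (1 + (A - B) * 0)) := tendsto_const_nhds.add (tendsto_const_nhds.mul h0)
  rw [mul_zero, add_zero] at h1
  apply h1.congr'
  filter_upwards [hB.eventually_gt_atTop 0] with n hn
  field_simp
  ring

lemma tendsto_rpow_natAdd_div (q A B : ℝ) (hA : 0 ≤ A) (hB : 0 ≤ B) :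
    Filter.Tendsto (fun n : ℕ => ((n : ℝ) + A) ^ q / ((n : ℝ) + B) ^ q) atTop (nhds 1) := by
  have h := (tendsto_natAdd_div A B).rpow_const (p := q) (Or.inl one_ne_zero)
  rw [Real.one_rpow] at h
  apply h.congr
  intro n
  rw [Real.div_rpow (by positivity) (by positivity)]

lemma tendsto_inv_rpow_natAdd (q B : ℝ) (hq : 0 < q) :
    Filter.Tendsto (fun n : ℕ => (((n : ℝ) + B) ^ q)⁻¹) atTop (nhds 0) := by
  have hB : Tendsto (fun n : ℕ => (n : ℝ) + B) atTop atTop :=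
    tendsto_atTop_add_const_right _ B tendsto_natCast_atTop_atTop
  exact ((tendsto_rpow_atTop hq).comp hB).inv_tendsto_atTop

lemma sum_rpow_div_tendsto (p : ℝ) (hp : -1 < p) :
    Filter.Tendsto
      (fun n : ℕ => (∑ i ∈ Finset.range n, (i : ℝ) ^ p) / (n : ℝ) ^ (p + 1)) atTop
      (nhds (1 / (p + 1))) := by
  set q := p + 1 with hq_def
  have hq : 0 < q := by linarith
  set P : ℕ → ℝ := fun n => ∑ i ∈ Finset.range n, (i : ℝ) ^ p with hPdef
  have hP2 : ∀ N : ℕ, P (N + 2) = (∑ i ∈ Finset.range (N+1), ((i:ℝ) + 1) ^ p) + (0:ℝ) ^ p := by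
    intro N
    have := Finset.sum_range_succ' (fun k : ℕ => (k:ℝ) ^ p) (N + 1)
    push_cast at this
    simpa using this
  have h0p : (0:ℝ) ≤ (0:ℝ) ^ p := Real.rpow_nonneg le_rfl p
  -- lower bound
  have hlow : ∀ N : ℕ, (((N:ℝ) + 1) ^ q - 1) / q ≤ P (N + 2) := by
    intro N
    rcases le_or_gt 0 p with hp0 | hp0
    · have hmono : MonotoneOn (fun x : ℝ => x ^ p) (Set.Icc (0:ℝ) ((0:ℝ) + (N+1:ℕ))) := by
        intro x hx y _ hxy
        exact Real.rpow_le_rpow hx.1 hxy hp0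
      have h := hmono.integral_le_sum
      rw [zero_add, integral_rpow (Or.inl hp), Real.zero_rpow (by positivity), sub_zero] at h
      have heq : (∑ i ∈ Finset.range (N+1), ((0:ℝ) + ((i + 1 : ℕ):ℝ)) ^ p)
          = ∑ i ∈ Finset.range (N+1), ((i:ℝ) + 1) ^ p := by
        apply Finset.sum_congr rfl; intro i _; push_cast; ring_nf
      rw [heq] at h
      have : ((N:ℝ)+1) ^ q / q ≤ P (N+2) := by
        rw [hP2 N]
        calc ((N:ℝ)+1) ^ q / q = ((N+1:ℕ):ℝ) ^ q / q := by push_cast; ring_nf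
          _ ≤ ∑ i ∈ Finset.range (N+1), ((i:ℝ) + 1) ^ p := h
          _ ≤ _ := by linarith
      calc (((N:ℝ) + 1) ^ q - 1) / q ≤ ((N:ℝ)+1) ^ q / q := by
            gcongr
            linarith
          _ ≤ P (N+2) := this
    · have hanti : AntitoneOn (fun x : ℝ => x ^ p) (Set.Icc (1:ℝ) ((1:ℝ) + (N+1:ℕ))) := by
        intro x hx y _ hxy
        exact Real.rpow_le_rpow_of_nonpos (lt_of_lt_of_le zero_lt_one hx.1) hxy hp0.le
      have h := hanti.integral_le_sum
      rw [integral_rpow (Or.inl hp), Real.one_rpow] at h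
      have heq : (∑ i ∈ Finset.range (N+1), ((1:ℝ) + (i:ℕ)) ^ p)
          = ∑ i ∈ Finset.range (N+1), ((i:ℝ) + 1) ^ p := by
        apply Finset.sum_congr rfl; intro i _; push_cast; ring_nf
      rw [heq] at h
      have h2 : ((1 + ((N+1:ℕ):ℝ)) ^ q - 1) / q ≤ P (N+2) := by
        rw [hP2 N]
        refine le_trans h ?_
        linarith
      refine le_trans ?_ h2
      have hb : ((N:ℝ) + 1) ≤ 1 + ((N+1:ℕ):ℝ) := by push_cast; linarith
      gcongr
  -- upper bound
  have hup : ∀ N : ℕ, P (N + 2) ≤ 1 + ((N:ℝ) + 2) ^ q / q := by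
    intro N
    rcases le_or_gt 0 p with hp0 | hp0
    · have hmono : MonotoneOn (fun x : ℝ => x ^ p) (Set.Icc (0:ℝ) ((0:ℝ) + (N+2:ℕ))) := by
        intro x hx y _ hxy
        exact Real.rpow_le_rpow hx.1 hxy hp0
      have h := hmono.sum_le_integral
      rw [zero_add, integral_rpow (Or.inl hp), Real.zero_rpow (by positivity), sub_zero] at h
      have heq : (∑ i ∈ Finset.range (N+2), ((0:ℝ) + (i:ℕ)) ^ p) = P (N+2) := by
        apply Finset.sum_congr rfl; intro i _; push_cast; ring_nf
      rw [heq] at h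
      calc P (N+2) ≤ ((N+2:ℕ):ℝ) ^ q / q := h
        _ = ((N:ℝ) + 2) ^ q / q := by push_cast; ring_nf
        _ ≤ 1 + ((N:ℝ) + 2) ^ q / q := by linarith
    · have hanti : AntitoneOn (fun x : ℝ => x ^ p) (Set.Icc (1:ℝ) ((1:ℝ) + (N:ℕ))) := by
        intro x hx y _ hxy
        exact Real.rpow_le_rpow_of_nonpos (lt_of_lt_of_le zero_lt_one hx.1) hxy hp0.le
      have h := hanti.sum_le_integral
      rw [integral_rpow (Or.inl hp), Real.one_rpow] at h
      have hsplit : P (N+2) = (∑ i ∈ Finset.range N, ((i:ℝ) + 1 + 1) ^ p) + 1 + (0:ℝ) ^ p := by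
        rw [hP2 N]
        have := Finset.sum_range_succ' (fun k : ℕ => ((k:ℝ) + 1) ^ p) N
        push_cast at this
        rw [this]
        norm_num
      have heq : (∑ i ∈ Finset.range N, ((1:ℝ) + ((i + 1 : ℕ):ℝ)) ^ p)
          = ∑ i ∈ Finset.range N, ((i:ℝ) + 1 + 1) ^ p := by
        apply Finset.sum_congr rfl; intro i _; congr 1; push_cast; try ring
      rw [heq] at h
      have h0 : (0:ℝ) ^ p = 0 := Real.zero_rpow (ne_of_lt hp0)
      have hbase : ((1:ℝ) + (N:ℕ)) ^ q ≤ ((N:ℝ) + 2) ^ q :=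
        Real.rpow_le_rpow (by positivity) (by push_cast; linarith) hq.le
      rw [hsplit, h0]
      have : (∑ i ∈ Finset.range N, ((i:ℝ) + 1 + 1) ^ p) ≤ (((N:ℝ) + 2) ^ q - 1) / q := by
        refine le_trans h ?_
        gcongr
      have hq1 : (0:ℝ) < 1 / q := by positivity
      calc (∑ i ∈ Finset.range N, ((i:ℝ) + 1 + 1) ^ p) + 1 + 0
          ≤ (((N:ℝ) + 2) ^ q - 1) / q + 1 + 0 := by linarith
        _ ≤ 1 + ((N:ℝ) + 2) ^ q / q := by
            rw [sub_div]
            have : (0:ℝ) ≤ 1 / q := by positivity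
            linarith
  -- squeeze
  have hpos : ∀ N : ℕ, (0:ℝ) < ((N:ℝ) + 2) ^ q := fun N => by positivity
  have hlo : Filter.Tendsto
      (fun N : ℕ => ((((N:ℝ) + 1) ^ q - 1) / q) / ((N:ℝ) + 2) ^ q) atTop (nhds (1/q)) := by
    have h := ((tendsto_rpow_natAdd_div q 1 2 zero_le_one (by norm_num)).div_const q).sub
      ((tendsto_inv_rpow_natAdd q 2 hq).div_const q)
    have he : (1:ℝ)/q - 0/q = 1/q := by ring
    rw [he] at h
    apply h.congr
    intro n
    have hy := (hpos n).ne'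
    field_simp
    try ring
    try tauto
  have hhi : Filter.Tendsto
      (fun N : ℕ => (1 + ((N:ℝ) + 2) ^ q / q) / ((N:ℝ) + 2) ^ q) atTop (nhds (1/q)) := by
    have h := (tendsto_inv_rpow_natAdd q 2 hq).add
      (tendsto_const_nhds : Filter.Tendsto (fun _ : ℕ => (1:ℝ)/q) atTop (nhds (1/q)))
    rw [zero_add] at h
    apply h.congr
    intro n
    have hy := (hpos n).ne'
    field_simp
    try ring
    try tauto
  have hsq : Filter.Tendsto (fun N : ℕ => P (N + 2) / ((N:ℝ) + 2) ^ q) atTop (nhds (1/q)) := by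
    apply tendsto_of_tendsto_of_tendsto_of_le_of_le hlo hhi
    · intro N
      exact (div_le_div_iff_of_pos_right (hpos N)).mpr (hlow N)
    · intro N
      exact (div_le_div_iff_of_pos_right (hpos N)).mpr (hup N)
  have h2 : Filter.Tendsto (fun n : ℕ => P (n+2) / (((n+2 : ℕ)):ℝ) ^ q) atTop (nhds (1/q)) := by
    apply hsq.congr
    intro n
    push_cast
    ring_nf
  exact (tendsto_add_atTop_iff_nat 2).mp h2

lemma sum_asymp (p : ℝ) (hp : -1 < p) (x : ℕ → ℝ) (L : ℝ)
    (hx : Filter.Tendsto (fun k : ℕ => x k / (k:ℝ) ^ p) atTop (nhds L)) :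
    Filter.Tendsto (fun n : ℕ => (∑ k ∈ Finset.range n, x k) / (n : ℝ) ^ (p + 1)) atTop
      (nhds (L / (p + 1))) := by
  set q := p + 1 with hq_def
  have hq : 0 < q := by linarith
  set g : ℕ → ℝ := fun k => (k:ℝ) ^ p with hg
  set G : ℕ → ℝ := fun n => ∑ i ∈ Finset.range n, g i with hG
  have hGq : Filter.Tendsto (fun n : ℕ => G n / (n:ℝ) ^ q) atTop (nhds (1/q)) :=
    sum_rpow_div_tendsto p hp
  have hg0 : 0 ≤ g := fun k => Real.rpow_nonneg (Nat.cast_nonneg k) p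
  have hnq_top : Filter.Tendsto (fun n : ℕ => (n:ℝ) ^ q) atTop atTop :=
    (tendsto_rpow_atTop hq).comp tendsto_natCast_atTop_atTop
  have hGtop : Filter.Tendsto G atTop atTop := by
    have h := (hGq.pos_mul_atTop (by positivity) hnq_top)
    apply h.congr'
    filter_upwards [eventually_gt_atTop 0] with n hn
    have : ((n:ℝ)) ^ q ≠ 0 := by positivity
    field_simp
  -- littleO
  have hlo : (fun k => x k - L * g k) =o[atTop] g := by
    rw [Asymptotics.isLittleO_iff_tendsto']
    · have h := hx.sub_const L
      rw [sub_self] at h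
      apply h.congr'
      filter_upwards [eventually_gt_atTop 0] with k hk
      have hgk : g k ≠ 0 := by
        simp only [hg]
        positivity
      field_simp [hg]
      ring
    · filter_upwards [eventually_gt_atTop 0] with k hk hgk
      exfalso
      have : g k ≠ 0 := by simp only [hg]; positivity
      exact this hgk
  have hsum := hlo.sum_range hg0 hGtop
  have hEG : Filter.Tendsto (fun n => (∑ i ∈ Finset.range n, (x i - L * g i)) / G n) atTop
      (nhds 0) := hsum.tendsto_div_nhds_zero
  have hEq : Filter.Tendsto
      (fun n => ((∑ i ∈ Finset.range n, (x i - L * g i)) / G n) * (G n / (n:ℝ) ^ q)) atTop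
      (nhds (0 * (1/q))) := hEG.mul hGq
  rw [zero_mul] at hEq
  have hE : Filter.Tendsto (fun n => (∑ i ∈ Finset.range n, (x i - L * g i)) / (n:ℝ) ^ q)
      atTop (nhds 0) := by
    apply hEq.congr'
    filter_upwards [hGtop.eventually_gt_atTop 0] with n hn
    rw [div_mul_div_comm, mul_comm (G n), ← div_mul_div_comm, div_self hn.ne', mul_one]
  have hfin := hE.add (hGq.const_mul L)
  have : (0 : ℝ) + L * (1/q) = L / q := by ring
  rw [this] at hfin
  apply hfin.congr
  intro n
  rw [Finset.sum_sub_distrib, ← Finset.mul_sum]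
  ring

lemma gamma_prod (s : ℝ) (hs : Real.Gamma s ≠ 0) (n : ℕ) :
    Real.Gamma (s + n + 1) = Real.Gamma s * ∏ j ∈ Finset.range (n+1), (s + j) := by
  have hne : ∀ j : ℕ, s + j ≠ 0 := by
    intro j h
    apply hs
    have : s = -(j:ℝ) := by linarith
    rw [this]
    exact Real.Gamma_neg_nat_eq_zero j
  induction n with
  | zero =>
      rw [Finset.prod_range_one]
      have h0 : s + (0:ℕ) = s := by norm_num
      rw [h0, Real.Gamma_add_one (fun h => hne 0 (by push_cast; linarith))]
      ring
  | succ n ih =>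
      have harg : s + (n+1:ℕ) + 1 = (s + n + 1) + 1 := by push_cast; ring
      rw [harg, Real.Gamma_add_one (fun h => hne (n+1) (by push_cast; linarith)),
        Finset.prod_range_succ (fun j : ℕ => s + (j:ℝ)) (n+1), ih, Nat.cast_add, Nat.cast_one]
      ring

lemma gammaF (s : ℝ) (hs : Real.Gamma s ≠ 0) :
    Filter.Tendsto (fun n : ℕ => Real.Gamma (s + n + 1) / ((n:ℝ) ^ s * (n.factorial : ℝ)))
      atTop (nhds 1) := by
  have hne : ∀ j : ℕ, s + j ≠ 0 := by
    intro j h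
    apply hs
    have : s = -(j:ℝ) := by linarith
    rw [this]
    exact Real.Gamma_neg_nat_eq_zero j
  have hΓne : ∀ n : ℕ, Real.Gamma (s + n + 1) ≠ 0 := by
    intro n
    rw [gamma_prod s hs n]
    exact mul_ne_zero hs (Finset.prod_ne_zero_iff.mpr fun j _ => hne j)
  have h := Real.GammaSeq_tendsto_Gamma s
  have hu : ∀ n : ℕ, Real.GammaSeq s n / Real.Gamma s
      = ((n:ℝ) ^ s * (n.factorial:ℝ)) / Real.Gamma (s + n + 1) := by
    intro n
    have hprod : (∏ j ∈ Finset.range (n+1), (s + (j:ℝ)))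
        = Real.Gamma (s + n + 1) / Real.Gamma s := by
      rw [gamma_prod s hs n]
      field_simp
    rw [Real.GammaSeq, hprod, div_div_eq_mul_div, div_div]
    rw [div_eq_div_iff (mul_ne_zero (hΓne n) hs) (hΓne n)]
    ring
  have h2 : Filter.Tendsto (fun n => Real.GammaSeq s n / Real.Gamma s) atTop (nhds 1) := by
    have := h.div_const (Real.Gamma s)
    rw [div_self hs] at this
    exact this
  rw [tendsto_congr hu] at h2
  have h3 := h2.inv₀ one_ne_zero
  rw [inv_one] at h3
  apply h3.congr
  intro n
  rw [inv_div]

lemma rho_tendsto (t : ℝ) (ht : Real.Gamma (t+1) ≠ 0) :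
    Filter.Tendsto (fun k : ℕ => Real.Gamma (t + k) / (Real.Gamma k * (k:ℝ) ^ t))
      atTop (nhds 1) := by
  have hF := gammaF (t+1) ht
  have htk : Filter.Tendsto (fun k : ℕ => (k:ℝ) + t) atTop atTop :=
    tendsto_atTop_add_const_right _ t tendsto_natCast_atTop_atTop
  have hratio : Filter.Tendsto (fun k : ℕ => (k:ℝ)^2 / ((t + k + 1) * (t + k)))
      atTop (nhds 1) := by
    have h1 := (tendsto_natAdd_div 0 (t+1)).mul (tendsto_natAdd_div 0 t)
    rw [mul_one] at h1
    apply h1.congr'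
    filter_upwards [htk.eventually_gt_atTop 0, eventually_gt_atTop 0] with k hk hk0
    have h2 : (0:ℝ) < (k:ℝ) + t + 1 := by linarith
    rw [add_zero, div_mul_div_comm]
    congr 1 <;> ring
  have hmain := hF.mul hratio
  rw [mul_one] at hmain
  apply hmain.congr'
  filter_upwards [htk.eventually_gt_atTop 0, eventually_gt_atTop 0] with k hkt hk0
  have hk0' : (0:ℝ) < (k:ℝ) := by exact_mod_cast hk0
  have hΓk : 0 < Real.Gamma k := Real.Gamma_pos_of_pos hk0'
  have hkt' : (0:ℝ) < t + k := by linarith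
  have hkt1 : (0:ℝ) < t + k + 1 := by linarith
  have hΓtk : 0 < Real.Gamma (t + k) := Real.Gamma_pos_of_pos hkt'
  have hfact : ((k.factorial : ℝ)) = k * Real.Gamma k := by
    have h1 : Real.Gamma ((k:ℝ) + 1) = k.factorial := by
      exact_mod_cast Real.Gamma_nat_eq_factorial k
    rw [← h1, Real.Gamma_add_one hk0'.ne']
  have hΓ2 : Real.Gamma (t + 1 + (k:ℝ) + 1) = (t + k + 1) * ((t + k) * Real.Gamma (t + k)) := by
    have e1 : t + 1 + (k:ℝ) + 1 = (t + (k:ℝ) + 1) + 1 := by ring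
    rw [e1, Real.Gamma_add_one (by linarith), Real.Gamma_add_one hkt'.ne']
  have hrpow : (k:ℝ) ^ (t + 1) = (k:ℝ) ^ t * k := by
    rw [Real.rpow_add_one hk0'.ne']
  rw [hΓ2, hfact, hrpow]
  have hkt_ne : (k:ℝ) ^ t ≠ 0 := by positivity
  field_simp

theorem stmt_3 (β a : ℝ) (d : ℕ) (hd : 1 ≤ d) (hβ : 0 ≤ β)
    (ha₁ : -1 / (2 * (d : ℝ) - 1) < a) (ha₂ : a < 1)
    (hreg : a < 1 - 1 / (2 * (β + 1)))
    (μ A w : ℕ → ℝ)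
    (hμ : ∀ k : ℕ, μ k = Real.Gamma (β + k) / (Real.Gamma k * Real.Gamma (β + 1)))
    (hA : ∀ k : ℕ, A k = Real.Gamma k * Real.Gamma (a * (β + 1) + 1) /
      Real.Gamma (a * (β + 1) + k))
    (hw : ∀ n : ℕ, w n = ∑ k ∈ Finset.Icc 1 n, (A k * μ k) ^ 2) :
    Filter.Tendsto (fun n : ℕ => w n / (n : ℝ) ^ (1 - 2 * (a * (β + 1) - β)))
      Filter.atTop
      (nhds ((1 / (1 + 2 * (β - a * (β + 1)))) *
        (Real.Gamma (a * (β + 1) + 1) / Real.Gamma (β + 1)) ^ 2)) := by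
  set c : ℝ := a * (β + 1) with hc
  have hb1 : (0:ℝ) < β + 1 := by linarith
  have hcb : c < β + 1/2 := by
    have h1 := mul_lt_mul_of_pos_right hreg hb1
    rw [sub_mul, one_mul] at h1
    have hhalf : 1 / (2*(β+1)) * (β+1) = 1/2 := by field_simp
    rw [hhalf] at h1
    linarith
  set p : ℝ := 2 * (β - c) with hp_def
  have hp : -1 < p := by rw [hp_def]; linarith
  set K : ℝ := Real.Gamma (c+1) / Real.Gamma (β+1) with hK
  have hΓβ1 : 0 < Real.Gamma (β+1) := Real.Gamma_pos_of_pos hb1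
  -- step 1: pointwise asymptotics
  have hx : Filter.Tendsto (fun k : ℕ => (A k * μ k)^2 / (k:ℝ) ^ p) atTop (nhds (K^2)) := by
    by_cases hΓc : Real.Gamma (c+1) = 0
    · have hK0 : K^2 = 0 := by rw [hK, hΓc]; simp
      rw [hK0]
      apply tendsto_const_nhds.congr
      intro k
      rw [hA k, hΓc]
      simp
    · have hρβ := rho_tendsto β (ne_of_gt hΓβ1)
      have hρc := rho_tendsto c hΓc
      have hdiv := hρβ.div hρc one_ne_zero
      rw [div_one] at hdiv
      have hr := hdiv.const_mul K
      rw [mul_one] at hr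
      have hr2 := hr.pow 2
      have hck : Filter.Tendsto (fun k : ℕ => c + (k:ℝ)) atTop atTop :=
        tendsto_atTop_add_const_left _ c tendsto_natCast_atTop_atTop
      apply hr2.congr'
      filter_upwards [hck.eventually_gt_atTop 0, eventually_gt_atTop 0] with k hkc hk0
      have hk1 : (0:ℝ) < (k:ℝ) := by exact_mod_cast hk0
      have hβk : (0:ℝ) < β + (k:ℝ) := by linarith
      have hΓk : 0 < Real.Gamma (k:ℝ) := Real.Gamma_pos_of_pos hk1
      have hΓck : 0 < Real.Gamma (c + (k:ℝ)) := Real.Gamma_pos_of_pos hkc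
      have hΓβk : 0 < Real.Gamma (β + (k:ℝ)) := Real.Gamma_pos_of_pos hβk
      have hkβ : (0:ℝ) < (k:ℝ) ^ β := Real.rpow_pos_of_pos hk1 β
      have hkc' : (0:ℝ) < (k:ℝ) ^ c := Real.rpow_pos_of_pos hk1 c
      have hkp : (0:ℝ) < (k:ℝ) ^ p := Real.rpow_pos_of_pos hk1 p
      have e1 : A k * μ k = Real.Gamma (c+1) * Real.Gamma (β+(k:ℝ)) /
          (Real.Gamma (c+(k:ℝ)) * Real.Gamma (β+1)) := by
        rw [hA k, hμ k]
        field_simp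
      have hk2 : (k:ℝ) ^ p * ((k:ℝ) ^ c)^2 = ((k:ℝ) ^ β)^2 := by
        rw [← Real.rpow_natCast ((k:ℝ) ^ c) 2, ← Real.rpow_natCast ((k:ℝ) ^ β) 2,
          ← Real.rpow_mul hk1.le, ← Real.rpow_mul hk1.le, ← Real.rpow_add hk1]
        norm_num
        rw [hp_def]
        ring_nf
      have e3 : ((k:ℝ)^c / (k:ℝ)^β)^2 = ((k:ℝ)^p)⁻¹ := by
        rw [div_pow]
        field_simp
        linear_combination hk2
      have e2 : K * (Real.Gamma (β + (k:ℝ)) / (Real.Gamma (k:ℝ) * (k:ℝ) ^ β) /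
          (Real.Gamma (c + (k:ℝ)) / (Real.Gamma (k:ℝ) * (k:ℝ) ^ c)))
          = (A k * μ k) * ((k:ℝ)^c / (k:ℝ)^β) := by
        rw [e1, hK]
        field_simp
      rw [Pi.div_apply, e2, mul_pow, e3, div_eq_mul_inv]
  -- step 2: sum asymptotics
  have hmain := sum_asymp p hp (fun k => (A k * μ k)^2) (K^2) hx
  have hIcc : ∀ n : ℕ, (∑ k ∈ Finset.Icc 1 n, (A k * μ k)^2)
      = ∑ k ∈ Finset.range (n+1), (A k * μ k)^2 := by
    intro n
    have hA0 : A 0 = 0 := by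
      rw [hA 0]
      simp [Real.Gamma_zero]
    rw [Finset.range_eq_Ico, Finset.sum_eq_sum_Ico_succ_bot (Nat.succ_pos n),
      ← Finset.Ico_add_one_right_eq_Icc, hA0]
    simp
  have hshift := hmain.comp (tendsto_add_atTop_nat 1)
  have hfac := tendsto_rpow_natAdd_div (p+1) 1 0 zero_le_one le_rfl
  have hcomb := hshift.mul hfac
  rw [mul_one] at hcomb
  have hfinal : Filter.Tendsto
      (fun n : ℕ => (∑ k ∈ Finset.Icc 1 n, (A k * μ k)^2) / (n:ℝ) ^ (p+1)) atTop
      (nhds (K^2 / (p+1))) := by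
    apply hcomb.congr'
    filter_upwards [eventually_gt_atTop 0] with n hn
    have hn1 : (0:ℝ) < (n:ℝ) := by exact_mod_cast hn
    have h1 : (0:ℝ) < ((n:ℝ)+1) ^ (p+1) := Real.rpow_pos_of_pos (by linarith) _
    have h2 : (0:ℝ) < ((n:ℝ)+0) ^ (p+1) := Real.rpow_pos_of_pos (by linarith) _
    simp only [Function.comp_apply, hIcc]
    push_cast
    rw [add_zero] at h2 ⊢
    field_simp
  have hexp : (1 : ℝ) - 2 * (c - β) = p + 1 := by rw [hp_def]; ring
  have hlim : (1 / (1 + 2 * (β - c))) * (Real.Gamma (c+1) / Real.Gamma (β+1))^2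
      = K^2 / (p+1) := by
    rw [hK, hp_def]
    ring
  rw [hlim, show (fun n : ℕ => w n / (n : ℝ) ^ (1 - 2 * (c - β)))
      = fun n : ℕ => (∑ k ∈ Finset.Icc 1 n, (A k * μ k)^2) / (n:ℝ) ^ (p+1) from
      funext fun n => by rw [hw n, hexp]]
  exact hfinal
end

section
/- Suppose a = 1 - 1/(2(β+1)) (critical regime). Then w_n / log n converges, as n → ∞, to (Γ(β + 3/2)/Γ(β+1))^2. -/
open Real Filter Finset Topology

lemma gamma_sq_le_mul {x y : ℝ} (hx : 0 < x) (hy : 0 < y) :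
    Real.Gamma ((x + y) / 2) ^ 2 ≤ Real.Gamma x * Real.Gamma y := by
  have h := Real.convexOn_log_Gamma.2 (Set.mem_Ioi.mpr hx) (Set.mem_Ioi.mpr hy)
      (by norm_num : (0:ℝ) ≤ 1/2) (by norm_num : (0:ℝ) ≤ 1/2) (by norm_num)
  simp only [Function.comp, smul_eq_mul] at h
  rw [show (1/2 : ℝ) * x + (1/2 : ℝ) * y = (x + y)/2 by ring] at h
  have hx' := Real.Gamma_pos_of_pos hx
  have hy' := Real.Gamma_pos_of_pos hy
  have hm : 0 < Real.Gamma ((x+y)/2) := Real.Gamma_pos_of_pos (by linarith)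
  have h2 : Real.log (Real.Gamma ((x+y)/2) ^ 2) ≤ Real.log (Real.Gamma x * Real.Gamma y) := by
    rw [Real.log_pow, Real.log_mul hx'.ne' hy'.ne']
    push_cast
    linarith
  exact (Real.log_le_log_iff (by positivity) (by positivity)).mp h2

lemma ratio_lower {x : ℝ} (hx : 0 < x) :
    1/x ≤ (Real.Gamma x / Real.Gamma (x + 1/2))^2 := by
  have h1 : Real.Gamma (x + 1/2) ^ 2 ≤ Real.Gamma x * Real.Gamma (x + 1) := by
    have := gamma_sq_le_mul hx (by linarith : (0:ℝ) < x + 1)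
    rwa [show (x + (x+1))/2 = x + 1/2 by ring] at this
  rw [Real.Gamma_add_one hx.ne'] at h1
  have hg := Real.Gamma_pos_of_pos hx
  have hg' := Real.Gamma_pos_of_pos (by linarith : (0:ℝ) < x + 1/2)
  rw [div_pow, div_le_div_iff₀ hx (by positivity)]
  nlinarith

lemma ratio_upper {x : ℝ} (hx : 0 < x) :
    (Real.Gamma x / Real.Gamma (x + 1/2))^2 ≤ 1/x + 1/(2*x^2) := by
  have h1 : Real.Gamma (x + 1) ^ 2 ≤ Real.Gamma (x + 1/2) * Real.Gamma (x + 3/2) := by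
    have := gamma_sq_le_mul (by linarith : (0:ℝ) < x + 1/2) (by linarith : (0:ℝ) < x + 3/2)
    rwa [show ((x + 1/2) + (x + 3/2))/2 = x + 1 by ring] at this
  rw [Real.Gamma_add_one hx.ne'] at h1
  rw [show x + 3/2 = (x + 1/2) + 1 by ring,
    Real.Gamma_add_one (by positivity : x + 1/2 ≠ 0)] at h1
  have hg := Real.Gamma_pos_of_pos hx
  have hg' := Real.Gamma_pos_of_pos (by linarith : (0:ℝ) < x + 1/2)
  have he : 1/x + 1/(2*x^2) = (x + 1/2)/x^2 := by field_simp
  rw [he, div_pow, div_le_div_iff₀ (by positivity) (by positivity)]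
  nlinarith

lemma sum_inv_sq_le (n : ℕ) : ∑ k ∈ Finset.Icc 1 n, ((k:ℝ))⁻¹^2 ≤ 2 := by
  rcases Nat.eq_zero_or_pos n with h | h
  · simp [h]
  have : ∑ k ∈ Finset.Icc 1 n, ((k:ℝ))⁻¹^2 ≤ 2 - 1/n := by
    induction n, h using Nat.le_induction with
    | base => norm_num
    | succ n hn ih =>
      rw [Finset.sum_Icc_succ_top (by omega)]
      have h1 : (0:ℝ) < n := by exact_mod_cast hn
      have key : (((n:ℕ):ℝ)+1)⁻¹^2 ≤ 1/(n:ℝ) - 1/((n:ℝ)+1) := by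
        have he : 1/(n:ℝ) - 1/((n:ℝ)+1) = 1/((n:ℝ)*((n:ℝ)+1)) := by field_simp; ring
        rw [he, inv_pow, inv_eq_one_div]
        apply one_div_le_one_div_of_le (by positivity)
        nlinarith
      push_cast
      push_cast at ih key
      linarith
  have h2 : (0:ℝ) < 1/n := by positivity
  linarith

lemma harmonic_real (n : ℕ) : ((harmonic n : ℚ) : ℝ) = ∑ k ∈ Finset.Icc 1 n, ((k:ℝ))⁻¹ := by
  rw [harmonic_eq_sum_Icc]; push_cast; rfl

lemma tendsto_harmonic_add_div_log (c : ℝ) :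
    Tendsto (fun n : ℕ => ((∑ k ∈ Finset.Icc 1 n, ((k:ℝ))⁻¹) + c) / Real.log n)
      atTop (𝓝 1) := by
  have hlog : Tendsto (fun n : ℕ => Real.log n) atTop atTop :=
    Real.tendsto_log_atTop.comp tendsto_natCast_atTop_atTop
  have h1 : Tendsto (fun n : ℕ => ((harmonic n : ℝ) - Real.log n + c)) atTop
      (𝓝 (Real.eulerMascheroniConstant + c)) :=
    Real.tendsto_harmonic_sub_log.add_const c
  have h2 := h1.div_atTop hlog
  have h3 := h2.add_const 1
  rw [zero_add] at h3
  apply h3.congr'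
  filter_upwards [eventually_ge_atTop 2] with n hn
  have hl : 0 < Real.log n := Real.log_pos (by exact_mod_cast hn)
  rw [← harmonic_real]
  field_simp
  ring

lemma aux_low {β k : ℝ} (hβ : 0 ≤ β) (hk : 1 ≤ k) : 1/k - β/k^2 ≤ 1/(β+k) := by
  have h0 : (0:ℝ) < k := by linarith
  rw [div_sub_div _ _ h0.ne' (by positivity : (k:ℝ)^2 ≠ 0),
    div_le_div_iff₀ (by positivity) (by linarith : (0:ℝ) < β + k)]
  nlinarith [mul_nonneg h0.le (mul_nonneg hβ hβ)]

lemma aux_up {β k : ℝ} (hβ : 0 ≤ β) (hk : 1 ≤ k) :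
    1/(β+k) + 1/(2*(β+k)^2) ≤ 1/k + 1/(2*k^2) := by
  have h0 : (0:ℝ) < k := by linarith
  gcongr <;> nlinarith

theorem stmt_4 (β a : ℝ) (hβ : 0 ≤ β) (ha : a = 1 - 1 / (2 * (β + 1)))
    (μ A w : ℕ → ℝ)
    (hμ : ∀ k : ℕ, μ k = Real.Gamma (β + k) / (Real.Gamma k * Real.Gamma (β + 1)))
    (hA : ∀ k : ℕ, A k = Real.Gamma k * Real.Gamma (a * (β + 1) + 1) /
      Real.Gamma (a * (β + 1) + k))
    (hw : ∀ n : ℕ, w n = ∑ k ∈ Finset.Icc 1 n, (A k * μ k) ^ 2) :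
    Filter.Tendsto (fun n : ℕ => w n / Real.log n) Filter.atTop
      (nhds ((Real.Gamma (β + 3 / 2) / Real.Gamma (β + 1)) ^ 2)) := by
  have hb1 : (0:ℝ) < β + 1 := by linarith
  have haa : a * (β + 1) = β + 1/2 := by rw [ha]; field_simp; ring
  -- lower bound on the sum
  have hlow : ∀ n : ℕ, (∑ k ∈ Finset.Icc 1 n, ((k:ℝ))⁻¹) + (-(β*2)) ≤
      ∑ k ∈ Finset.Icc 1 n,
        (Real.Gamma (β + (k:ℝ)) / Real.Gamma (β + (k:ℝ) + 1/2))^2 := by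
    intro n
    have h1 : ∀ k ∈ Finset.Icc 1 n, (k:ℝ)⁻¹ - β * ((k:ℝ))⁻¹^2 ≤
        (Real.Gamma (β + (k:ℝ)) / Real.Gamma (β + (k:ℝ) + 1/2))^2 := by
      intro k hk
      have hk1 : (1:ℝ) ≤ (k:ℝ) := by exact_mod_cast (Finset.mem_Icc.mp hk).1
      have h2 := ratio_lower (x := β + (k:ℝ)) (by linarith)
      have h3 := aux_low hβ hk1
      have e : (k:ℝ)⁻¹ - β * ((k:ℝ))⁻¹^2 = 1/(k:ℝ) - β/(k:ℝ)^2 := by ring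
      rw [e]; linarith
    calc (∑ k ∈ Finset.Icc 1 n, ((k:ℝ))⁻¹) + (-(β*2))
        ≤ ∑ k ∈ Finset.Icc 1 n, ((k:ℝ)⁻¹ - β * ((k:ℝ))⁻¹^2) := by
          rw [Finset.sum_sub_distrib, ← Finset.mul_sum]
          have h4 := sum_inv_sq_le n
          have h5 := mul_le_mul_of_nonneg_left h4 hβ
          linarith
      _ ≤ _ := Finset.sum_le_sum h1
  -- upper bound on the sum
  have hup : ∀ n : ℕ, (∑ k ∈ Finset.Icc 1 n,
        (Real.Gamma (β + (k:ℝ)) / Real.Gamma (β + (k:ℝ) + 1/2))^2) ≤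
      (∑ k ∈ Finset.Icc 1 n, ((k:ℝ))⁻¹) + 1 := by
    intro n
    have h1 : ∀ k ∈ Finset.Icc 1 n,
        (Real.Gamma (β + (k:ℝ)) / Real.Gamma (β + (k:ℝ) + 1/2))^2 ≤
        (k:ℝ)⁻¹ + (1/2) * ((k:ℝ))⁻¹^2 := by
      intro k hk
      have hk1 : (1:ℝ) ≤ (k:ℝ) := by exact_mod_cast (Finset.mem_Icc.mp hk).1
      have h2 := ratio_upper (x := β + (k:ℝ)) (by linarith)
      have h3 := aux_up hβ hk1
      have e : (k:ℝ)⁻¹ + (1/2) * ((k:ℝ))⁻¹^2 = 1/(k:ℝ) + 1/(2*(k:ℝ)^2) := by ring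
      rw [e]; linarith
    calc (∑ k ∈ Finset.Icc 1 n,
          (Real.Gamma (β + (k:ℝ)) / Real.Gamma (β + (k:ℝ) + 1/2))^2)
        ≤ ∑ k ∈ Finset.Icc 1 n, ((k:ℝ)⁻¹ + (1/2) * ((k:ℝ))⁻¹^2) :=
          Finset.sum_le_sum h1
      _ ≤ _ := by
          rw [Finset.sum_add_distrib, ← Finset.mul_sum]
          have h4 := sum_inv_sq_le n
          linarith
  -- squeeze
  have hS1 : Tendsto (fun n : ℕ =>
      (∑ k ∈ Finset.Icc 1 n,
        (Real.Gamma (β + (k:ℝ)) / Real.Gamma (β + (k:ℝ) + 1/2))^2) / Real.log n)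
      atTop (𝓝 1) := by
    apply tendsto_of_tendsto_of_tendsto_of_le_of_le'
      (tendsto_harmonic_add_div_log (-(β*2))) (tendsto_harmonic_add_div_log 1)
    · filter_upwards [eventually_ge_atTop 2] with n hn
      have hl : 0 < Real.log n := Real.log_pos (by exact_mod_cast hn)
      exact div_le_div_of_nonneg_right (hlow n) hl.le
    · filter_upwards [eventually_ge_atTop 2] with n hn
      have hl : 0 < Real.log n := Real.log_pos (by exact_mod_cast hn)
      exact div_le_div_of_nonneg_right (hup n) hl.le
  -- term identity
  have hterm : ∀ k : ℕ, 1 ≤ k → (A k * μ k)^2 =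
      (Real.Gamma (β + 3/2) / Real.Gamma (β + 1))^2 *
      (Real.Gamma (β + (k:ℝ)) / Real.Gamma (β + (k:ℝ) + 1/2))^2 := by
    intro k hk
    have hkR : (1:ℝ) ≤ (k:ℝ) := by exact_mod_cast hk
    have hgk : 0 < Real.Gamma (k:ℝ) := Real.Gamma_pos_of_pos (by linarith)
    have hgb : 0 < Real.Gamma (β + 1) := Real.Gamma_pos_of_pos hb1
    have hgd : 0 < Real.Gamma (β + (k:ℝ) + 1/2) := Real.Gamma_pos_of_pos (by linarith)
    rw [hA, hμ, haa, show β + 1/2 + 1 = β + 3/2 by ring,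
        show β + 1/2 + (k:ℝ) = β + (k:ℝ) + 1/2 by ring]
    field_simp
  have final := hS1.const_mul ((Real.Gamma (β + 3/2) / Real.Gamma (β + 1))^2)
  rw [mul_one] at final
  apply final.congr'
  filter_upwards with n
  rw [hw n, Finset.sum_congr rfl (fun k hk => hterm k (Finset.mem_Icc.mp hk).1),
    ← Finset.mul_sum, mul_div_assoc]
end

section
/- Suppose a > 1 - 1/(2(β+1)) (superdiffusive regime). Then the sequence w_n converges, as n → ∞, to the finite sum ∑_{k=1}^{∞} (Γ(a(β+1)+1)Γ(β+k)/(Γ(a(β+1)+k)Γ(β+1)))^2 < ∞. -/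
open Real Filter Finset

/-- Wendel-type bound from log-convexity of Gamma. -/
lemma gamma_ratio_le_aux (d x : ℝ) (hd0 : 0 < d) (hd1 : d < 1) (hx : 1 ≤ x) :
    Real.Gamma x / Real.Gamma (x + d) ≤ 2 * x ^ (-d) := by
  have hx0 : (0:ℝ) < x := by linarith
  have hxd : (0:ℝ) < x + d := by linarith
  have hGxd : 0 < Real.Gamma (x + d) := Real.Gamma_pos_of_pos hxd
  have hGx : 0 < Real.Gamma x := Real.Gamma_pos_of_pos hx0
  have hconv := Real.Gamma_mul_add_mul_le_rpow_Gamma_mul_rpow_Gamma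
    (s := x + d) (t := x + d + 1) (a := d) (b := 1 - d) hxd (by linarith) hd0
    (by linarith) (by ring)
  have harg : d * (x + d) + (1 - d) * (x + d + 1) = x + 1 := by ring
  rw [harg, Real.Gamma_add_one (ne_of_gt hxd), Real.Gamma_add_one (ne_of_gt hx0)] at hconv
  have hkey : x * Real.Gamma x ≤ Real.Gamma (x + d) * (x + d) ^ (1 - d) := by
    have : ((x + d) * Real.Gamma (x + d)) ^ (1 - d)
        = (x + d) ^ (1 - d) * Real.Gamma (x + d) ^ (1 - d) :=
      Real.mul_rpow hxd.le hGxd.le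
    rw [this] at hconv
    calc x * Real.Gamma x
        ≤ Real.Gamma (x + d) ^ d * ((x + d) ^ (1 - d) * Real.Gamma (x + d) ^ (1 - d)) :=
          hconv
      _ = (Real.Gamma (x + d) ^ d * Real.Gamma (x + d) ^ (1 - d)) * (x + d) ^ (1 - d) := by
          ring
      _ = Real.Gamma (x + d) * (x + d) ^ (1 - d) := by
          rw [← Real.rpow_add hGxd]; norm_num
  have hstep : Real.Gamma x / Real.Gamma (x + d) ≤ (x + d) ^ (1 - d) / x := by
    rw [div_le_div_iff₀ hGxd hx0]
    linarith [hkey]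
  refine hstep.trans ?_
  have h2x : (x + d) ^ (1 - d) ≤ 2 * x ^ (1 - d) := by
    calc (x + d) ^ (1 - d) ≤ (2 * x) ^ (1 - d) :=
          Real.rpow_le_rpow hxd.le (by linarith) (by linarith)
      _ = 2 ^ (1 - d) * x ^ (1 - d) := Real.mul_rpow (by norm_num) hx0.le
      _ ≤ 2 * x ^ (1 - d) := by
          have h1 : (2:ℝ) ^ (1 - d) ≤ 2 ^ (1:ℝ) :=
            Real.rpow_le_rpow_of_exponent_le (by norm_num) (by linarith)
          have h2 : (0:ℝ) ≤ x ^ (1 - d) := Real.rpow_nonneg hx0.le _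
          nlinarith [h1, h2, Real.rpow_one (2:ℝ)]
  have hxx : x ^ (1 - d) / x = x ^ (-d) := by
    rw [eq_comm, eq_div_iff (ne_of_gt hx0), ← Real.rpow_add_one (ne_of_gt hx0)]
    ring_nf
  calc (x + d) ^ (1 - d) / x ≤ 2 * x ^ (1 - d) / x := by
        gcongr
    _ = 2 * (x ^ (1 - d) / x) := by ring
    _ = 2 * x ^ (-d) := by rw [hxx]

theorem stmt_5 (β a : ℝ) (hβ : 0 ≤ β) (ha0 : 0 < a) (ha1 : a < 1)
    (hreg : 1 - 1 / (2 * (β + 1)) < a)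
    (μ A w : ℕ → ℝ)
    (hμ : ∀ k : ℕ, μ k = Real.Gamma (β + k) / (Real.Gamma k * Real.Gamma (β + 1)))
    (hA : ∀ k : ℕ, A k = Real.Gamma k * Real.Gamma (a * (β + 1) + 1) /
      Real.Gamma (a * (β + 1) + k))
    (hw : ∀ n : ℕ, w n = ∑ k ∈ Finset.Icc 1 n, (A k * μ k) ^ 2) :
    Summable (fun k : ℕ =>
      (Real.Gamma (a * (β + 1) + 1) * Real.Gamma (β + ((k : ℝ) + 1)) /
        (Real.Gamma (a * (β + 1) + ((k : ℝ) + 1)) * Real.Gamma (β + 1))) ^ 2) ∧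
    Filter.Tendsto w Filter.atTop
      (nhds (∑' k : ℕ,
        (Real.Gamma (a * (β + 1) + 1) * Real.Gamma (β + ((k : ℝ) + 1)) /
          (Real.Gamma (a * (β + 1) + ((k : ℝ) + 1)) * Real.Gamma (β + 1))) ^ 2)) := by
  set c : ℝ := a * (β + 1) with hc_def
  set d : ℝ := c - β with hd_def
  have hb1 : (0:ℝ) < β + 1 := by linarith
  have hkey : 1 / (2 * (β + 1)) * (2 * (β + 1)) = 1 := by
    field_simp
  have hd2 : 1 / 2 < d := by nlinarith [hreg, hb1, hkey]
  have hd1 : d < 1 := by nlinarith [ha1, hb1]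
  have hd0 : 0 < d := by linarith
  have hc0 : 0 < c := by positivity
  have hGβ1 : 0 < Real.Gamma (β + 1) := Real.Gamma_pos_of_pos hb1
  have hGc1 : 0 < Real.Gamma (c + 1) := Real.Gamma_pos_of_pos (by linarith)
  set K : ℝ := Real.Gamma (c + 1) / Real.Gamma (β + 1) with hK_def
  have hK0 : 0 < K := div_pos hGc1 hGβ1
  set f : ℕ → ℝ := fun k : ℕ =>
      (Real.Gamma (c + 1) * Real.Gamma (β + ((k : ℝ) + 1)) /
        (Real.Gamma (c + ((k : ℝ) + 1)) * Real.Gamma (β + 1))) ^ 2 with hf_def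
  -- rewrite f in terms of the ratio
  have hfeq : ∀ k : ℕ, f k
      = (K * (Real.Gamma (β + ((k : ℝ) + 1)) / Real.Gamma (β + ((k : ℝ) + 1) + d))) ^ 2 := by
    intro k
    have harg : c + ((k : ℝ) + 1) = β + ((k : ℝ) + 1) + d := by
      rw [hd_def]; ring
    simp only [hf_def]
    rw [harg, hK_def]
    ring
  -- summability
  have hsum : Summable f := by
    have hg : Summable (fun k : ℕ => 4 * K ^ 2 * ((k : ℝ) + 1) ^ (-(2 * d))) := by
      have h0 : Summable (fun n : ℕ => (n : ℝ) ^ (-(2 * d))) :=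
        Real.summable_nat_rpow.mpr (by linarith)
      have h1 : Summable (fun n : ℕ => ((n + 1 : ℕ) : ℝ) ^ (-(2 * d))) :=
        (summable_nat_add_iff 1).mpr h0
      have h2 : Summable (fun n : ℕ => ((n : ℝ) + 1) ^ (-(2 * d))) := by
        refine h1.congr fun n => ?_
        push_cast
        ring_nf
      exact h2.mul_left _
    refine Summable.of_nonneg_of_le (fun k => sq_nonneg _) (fun k => ?_) hg
    set x : ℝ := β + ((k : ℝ) + 1) with hx_def
    have hx1 : (1:ℝ) ≤ x := by
      have : (0:ℝ) ≤ (k : ℝ) := Nat.cast_nonneg k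
      rw [hx_def]; linarith
    have hx0 : (0:ℝ) < x := by linarith
    have hratio := gamma_ratio_le_aux d x hd0 hd1 hx1
    have hGx : 0 < Real.Gamma x := Real.Gamma_pos_of_pos hx0
    have hGxd : 0 < Real.Gamma (x + d) := Real.Gamma_pos_of_pos (by linarith)
    have hrpos : 0 ≤ Real.Gamma x / Real.Gamma (x + d) := le_of_lt (div_pos hGx hGxd)
    rw [hfeq k]
    have hsq : (K * (Real.Gamma x / Real.Gamma (x + d))) ^ 2 ≤ (K * (2 * x ^ (-d))) ^ 2 := by
      have h1 : K * (Real.Gamma x / Real.Gamma (x + d)) ≤ K * (2 * x ^ (-d)) :=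
        mul_le_mul_of_nonneg_left hratio hK0.le
      have h2 : 0 ≤ K * (Real.Gamma x / Real.Gamma (x + d)) := mul_nonneg hK0.le hrpos
      exact pow_le_pow_left₀ h2 h1 2
    refine hsq.trans ?_
    have hxneg : (x ^ (-d)) ^ 2 = x ^ (-(2 * d)) := by
      rw [sq, ← Real.rpow_add hx0]; ring_nf
    have hxk : x ^ (-(2 * d)) ≤ ((k : ℝ) + 1) ^ (-(2 * d)) := by
      have hk1 : (0:ℝ) < (k : ℝ) + 1 := by positivity
      rw [Real.rpow_neg hx0.le, Real.rpow_neg hk1.le]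
      apply inv_anti₀ (Real.rpow_pos_of_pos hk1 _)
      exact Real.rpow_le_rpow hk1.le (by rw [hx_def]; linarith) (by linarith)
    calc (K * (2 * x ^ (-d))) ^ 2 = 4 * K ^ 2 * (x ^ (-d)) ^ 2 := by ring
      _ = 4 * K ^ 2 * x ^ (-(2 * d)) := by rw [hxneg]
      _ ≤ 4 * K ^ 2 * ((k : ℝ) + 1) ^ (-(2 * d)) := by
          apply mul_le_mul_of_nonneg_left hxk
          positivity
  refine ⟨hsum, ?_⟩
  -- identify w n with partial sums of f
  have hweq : ∀ n : ℕ, w n = ∑ i ∈ Finset.range n, f i := by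
    intro n
    rw [hw n, ← Finset.Ico_add_one_right_eq_Icc, Finset.sum_Ico_eq_sum_range]
    simp only [Nat.add_sub_cancel]
    refine Finset.sum_congr rfl fun i _ => ?_
    have hΓi : 0 < Real.Gamma ((1 + i : ℕ) : ℝ) := by
      apply Real.Gamma_pos_of_pos
      push_cast
      positivity
    have hΓci : 0 < Real.Gamma (c + ((1 + i : ℕ) : ℝ)) := by
      apply Real.Gamma_pos_of_pos
      push_cast
      positivity
    have h1 : (c + ((1 + i : ℕ) : ℝ)) = c + ((i : ℝ) + 1) := by push_cast; ring
    have h2 : (β + ((1 + i : ℕ) : ℝ)) = β + ((i : ℝ) + 1) := by push_cast; ring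
    simp only [hA, hμ, hf_def]
    rw [h1, h2]
    rw [h1] at hΓci
    field_simp
  have := hsum.hasSum.tendsto_sum_nat
  refine this.congr fun n => (hweq n).symm
end
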